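/- arXiv:2104.01079 — 5 statements merged into one kernel-verified Lean document; each statement's English description precedes it below -/
import Mathlib

section
/- Let p be a prime and k ≥ 1. In the quotient ring ℚ[x₁,…,x_k]/(Φ_p(x₁), x₁ − x₂^p, x₂ − x₃^p, …, x_{k−1} − x_k^p), the resulting ℚ-algebra is isomorphic to the cyclotomic field ℚ(ζ_{p^k}). -/
open Polynomial in
lemma cyclotomic_prime_pow_expand_aux (p : ℕ) (hp : p.Prime) (k : ℕ) (hk : 1 ≤ k) :
    Polynomial.cyclotomic (p ^ k) ℚ =
      Polynomial.expand ℚ (p ^ (k - 1)) (Polynomial.cyclotomic p ℚ) := by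
  induction k with
  | zero => omega
  | succ k ih =>
    rcases Nat.eq_zero_or_pos k with rfl | hk'
    · simp [expand_one]
    · have h1 := cyclotomic_expand_eq_cyclotomic hp (dvd_pow_self p hk'.ne') ℚ (n := p ^ k)
      have h2 : p ^ (k + 1) = p ^ k * p := by ring
      rw [h2, ← h1, ih hk', expand_expand]
      congr 1
      have h3 : k + 1 - 1 = (k - 1) + 1 := by omega
      rw [h3, pow_succ, mul_comm]

open MvPolynomial in
/-- For a prime `p` and `k ≥ 1`, the quotient
`ℚ[x₁,…,x_k]/(Φ_p(x₁), x₁ − x₂^p, …, x_{k−1} − x_k^p)` is isomorphic as a `ℚ`-algebra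
to the cyclotomic field `ℚ(ζ_{p^k})`.  (Variables are indexed zero-based by `Fin k`.) -/
theorem quotient_relations_iso_cyclotomicField (p k : ℕ) (hp : p.Prime) (hk : 1 ≤ k) :
    Nonempty ((MvPolynomial (Fin k) ℚ ⧸
        Ideal.span ({Polynomial.aeval (X (⟨0, hk⟩ : Fin k)) (Polynomial.cyclotomic p ℚ)} ∪
          {f | ∃ (i : ℕ) (h : i + 1 < k),
            f = X (⟨i, Nat.lt_of_succ_lt h⟩ : Fin k) - X (⟨i + 1, h⟩ : Fin k) ^ p} :
            Set (MvPolynomial (Fin k) ℚ))) ≃ₐ[ℚ]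
      (haveI : NeZero (p ^ k) := ⟨(pow_pos hp.pos k).ne'⟩; CyclotomicField (p ^ k) ℚ)) := by
  classical
  set S : Set (MvPolynomial (Fin k) ℚ) :=
    ({Polynomial.aeval (X (⟨0, hk⟩ : Fin k)) (Polynomial.cyclotomic p ℚ)} ∪
      {f | ∃ (i : ℕ) (h : i + 1 < k),
        f = X (⟨i, Nat.lt_of_succ_lt h⟩ : Fin k) - X (⟨i + 1, h⟩ : Fin k) ^ p}) with hS
  set I : Ideal (MvPolynomial (Fin k) ℚ) := Ideal.span S with hI
  have hklt : k - 1 < k := by omega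
  -- key: in the quotient, X (k-1-d) = X (k-1) ^ (p ^ d)
  have hkey : ∀ d : ℕ, d < k →
      Ideal.Quotient.mk I (X (⟨k - 1 - d, by omega⟩ : Fin k)) =
        (Ideal.Quotient.mk I (X (⟨k - 1, hklt⟩ : Fin k))) ^ (p ^ d) := by
    intro d hd
    induction d with
    | zero => simp
    | succ d ihd =>
      have hd' : d < k := by omega
      have hi1 : (k - 1 - (d + 1)) + 1 < k := by omega
      have hmem : (X (⟨k - 1 - (d + 1), by omega⟩ : Fin k) -
          X (⟨(k - 1 - (d + 1)) + 1, hi1⟩ : Fin k) ^ p) ∈ I := by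
        apply Ideal.subset_span
        exact Or.inr ⟨k - 1 - (d + 1), hi1, rfl⟩
      have h0 : Ideal.Quotient.mk I (X (⟨k - 1 - (d + 1), by omega⟩ : Fin k)) =
          (Ideal.Quotient.mk I (X (⟨(k - 1 - (d + 1)) + 1, hi1⟩ : Fin k))) ^ p := by
        have h00 := (Ideal.Quotient.eq_zero_iff_mem).2 hmem
        rw [map_sub, sub_eq_zero] at h00
        simpa using h00
      have heq : (⟨(k - 1 - (d + 1)) + 1, hi1⟩ : Fin k) = (⟨k - 1 - d, by omega⟩ : Fin k) := by
        ext; simp; omega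
      rw [h0, heq, ihd hd', ← pow_mul, ← pow_succ]
  -- the root of cyclotomic (p^k) in the quotient
  have hexp := cyclotomic_prime_pow_expand_aux p hp k hk
  have hroot : Polynomial.aeval (Ideal.Quotient.mk I (X (⟨k - 1, hklt⟩ : Fin k)))
      (Polynomial.cyclotomic (p ^ k) ℚ) = 0 := by
    rw [hexp, Polynomial.expand_aeval]
    have h1 := hkey (k - 1) hklt
    have heq0 : (⟨k - 1 - (k - 1), by omega⟩ : Fin k) = (⟨0, hk⟩ : Fin k) := by
      ext; simp
    rw [heq0] at h1
    rw [← h1]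
    have h2 : Polynomial.aeval (Ideal.Quotient.mk I (X (⟨0, hk⟩ : Fin k)))
        (Polynomial.cyclotomic p ℚ) =
        Ideal.Quotient.mkₐ ℚ I (Polynomial.aeval (X (⟨0, hk⟩ : Fin k))
          (Polynomial.cyclotomic p ℚ)) := by
      rw [← Polynomial.aeval_algHom_apply]
      simp
    rw [h2]
    rw [Ideal.Quotient.mkₐ_eq_mk, Ideal.Quotient.eq_zero_iff_mem]
    exact Ideal.subset_span (Or.inl rfl)
  set G : AdjoinRoot (Polynomial.cyclotomic (p ^ k) ℚ) →ₐ[ℚ]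
      (MvPolynomial (Fin k) ℚ ⧸ I) :=
    AdjoinRoot.liftAlgHom _ (Algebra.ofId ℚ _) (Ideal.Quotient.mk I (X (⟨k - 1, hklt⟩ : Fin k)))
      (by rw [Algebra.toRingHom_ofId, ← Polynomial.aeval_def]; exact hroot) with hG
  -- the map from the polynomial ring
  set φ : MvPolynomial (Fin k) ℚ →ₐ[ℚ] AdjoinRoot (Polynomial.cyclotomic (p ^ k) ℚ) :=
    MvPolynomial.aeval (fun i : Fin k =>
      AdjoinRoot.root (Polynomial.cyclotomic (p ^ k) ℚ) ^ (p ^ (k - 1 - i.val))) with hφ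
  have hker : ∀ a ∈ I, φ a = 0 := by
    intro a ha
    have hSker : S ⊆ RingHom.ker φ.toRingHom := by
      rintro f (rfl | ⟨i, h, rfl⟩)
      · simp only [SetLike.mem_coe, RingHom.mem_ker]
        show φ (Polynomial.aeval (X (⟨0, hk⟩ : Fin k)) (Polynomial.cyclotomic p ℚ)) = 0
        rw [← Polynomial.aeval_algHom_apply]
        have hx0 : φ (X (⟨0, hk⟩ : Fin k)) =
            AdjoinRoot.root (Polynomial.cyclotomic (p ^ k) ℚ) ^ (p ^ (k - 1)) := by
          simp [hφ]
        rw [hx0, ← Polynomial.expand_aeval, ← hexp, AdjoinRoot.aeval_eq, AdjoinRoot.mk_self]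
      · simp only [SetLike.mem_coe, RingHom.mem_ker]
        show φ (X (⟨i, Nat.lt_of_succ_lt h⟩ : Fin k) - X (⟨i + 1, h⟩ : Fin k) ^ p) = 0
        rw [map_sub, map_pow]
        have h1 : φ (X (⟨i, Nat.lt_of_succ_lt h⟩ : Fin k)) =
            AdjoinRoot.root (Polynomial.cyclotomic (p ^ k) ℚ) ^ (p ^ (k - 1 - i)) := by
          simp [hφ]
        have h2 : φ (X (⟨i + 1, h⟩ : Fin k)) =
            AdjoinRoot.root (Polynomial.cyclotomic (p ^ k) ℚ) ^ (p ^ (k - 1 - (i + 1))) := by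
          simp [hφ]
        rw [h1, h2, ← pow_mul, ← pow_succ]
        have h3 : k - 1 - (i + 1) + 1 = k - 1 - i := by omega
        rw [h3, sub_self]
    have hle : I ≤ RingHom.ker φ.toRingHom := Ideal.span_le.2 hSker
    exact hle ha
  set F : (MvPolynomial (Fin k) ℚ ⧸ I) →ₐ[ℚ] AdjoinRoot (Polynomial.cyclotomic (p ^ k) ℚ) :=
    Ideal.Quotient.liftₐ I φ hker with hF
  have hFmk : ∀ x, F (Ideal.Quotient.mk I x) = φ x := fun x => by
    rw [hF, Ideal.Quotient.liftₐ_apply]; rfl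
  -- F ∘ G = id
  have h1 : F.comp G = AlgHom.id ℚ _ := by
    apply AdjoinRoot.algHom_ext
    rw [AlgHom.comp_apply, hG, AdjoinRoot.liftAlgHom_root, hFmk]
    simp [hφ]
  -- G ∘ F = id
  have h2 : G.comp F = AlgHom.id ℚ _ := by
    have hcomp : (G.comp F).comp (Ideal.Quotient.mkₐ ℚ I) = Ideal.Quotient.mkₐ ℚ I := by
      apply MvPolynomial.algHom_ext
      intro i
      simp only [AlgHom.comp_apply, Ideal.Quotient.mkₐ_eq_mk]
      rw [hFmk]
      have hφi : φ (X i) =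
          AdjoinRoot.root (Polynomial.cyclotomic (p ^ k) ℚ) ^ (p ^ (k - 1 - i.val)) := by
        simp [hφ]
      rw [hφi, map_pow, hG, AdjoinRoot.liftAlgHom_root]
      have hd : k - 1 - i.val < k := by omega
      have hkd := hkey (k - 1 - i.val) hd
      have heqi : (⟨k - 1 - (k - 1 - i.val), by omega⟩ : Fin k) = i := by
        ext; simp; omega
      rw [heqi] at hkd
      exact hkd.symm
    ext x
    obtain ⟨y, rfl⟩ := Ideal.Quotient.mk_surjective x
    have hxy := congrArg (fun f => f y) hcomp
    simpa using hxy
  set e1 : (MvPolynomial (Fin k) ℚ ⧸ I) ≃ₐ[ℚ]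
      AdjoinRoot (Polynomial.cyclotomic (p ^ k) ℚ) := AlgEquiv.ofAlgHom F G h1 h2 with he1
  -- AdjoinRoot (cyclotomic (p^k)) ≃ CyclotomicField
  set n : ℕ := p ^ k with hn
  haveI : NeZero n := ⟨(pow_pos hp.pos k).ne'⟩
  haveI : NeZero (n : ℚ) := ⟨by exact_mod_cast (pow_pos hp.pos k).ne'⟩
  haveI := CyclotomicField.isCyclotomicExtension n ℚ
  set ζ := @IsCyclotomicExtension.zeta n _ ℚ (CyclotomicField n ℚ) _ _ (CyclotomicField.algebra n ℚ) this with hζdef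
  have hζ : IsPrimitiveRoot ζ (p ^ k) := @IsCyclotomicExtension.zeta_spec n _ ℚ (CyclotomicField n ℚ) _ _ (CyclotomicField.algebra n ℚ) this
  have hmin : Polynomial.cyclotomic (p ^ k) ℚ = minpoly ℚ ζ :=
    Polynomial.cyclotomic_eq_minpoly_rat hζ (pow_pos hp.pos k)
  have hint : IsIntegral ℚ ζ :=
    ⟨Polynomial.X ^ (p ^ k) - 1, Polynomial.monic_X_pow_sub_C 1 (pow_pos hp.pos k).ne',
      by simp [hζ.pow_eq_one]⟩
  have e2 : AdjoinRoot (Polynomial.cyclotomic (p ^ k) ℚ) ≃ₐ[ℚ] CyclotomicField n ℚ := by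
    rw [hmin]
    exact (minpoly.equivAdjoin hint).trans
      ((Subalgebra.equivOfEq _ _
        (IsCyclotomicExtension.adjoin_primitive_root_eq_top (h := this)
          (@IsCyclotomicExtension.zeta_spec n _ ℚ (CyclotomicField n ℚ) _ _ (CyclotomicField.algebra n ℚ) this))).trans Subalgebra.topEquiv)
  exact ⟨e1.trans e2⟩
end

section
/- Let m and n be coprime positive integers. Then the tensor product ℚ(ζ_m) ⊗_ℚ ℚ(ζ_n) is isomorphic as a ℚ-algebra to ℚ(ζ_{mn}). -/
open Polynomial Module IsCyclotomicExtension

open scoped TensorProduct in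
/-- For coprime positive integers `m` and `n`, the tensor product
`ℚ(ζ_m) ⊗_ℚ ℚ(ζ_n)` is isomorphic as a `ℚ`-algebra to `ℚ(ζ_{mn})`. -/
theorem tensor_cyclotomicField_iso (m n : ℕ) (hm : 0 < m) (hn : 0 < n)
    (h : Nat.Coprime m n) :
    Nonempty ((CyclotomicField m ℚ ⊗[ℚ] CyclotomicField n ℚ) ≃ₐ[ℚ]
      CyclotomicField (m * n) ℚ) := by
  set p : ℕ+ := ⟨m, hm⟩
  set q : ℕ+ := ⟨n, hn⟩
  set r : ℕ+ := ⟨m * n, Nat.mul_pos hm hn⟩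
  set A := CyclotomicField p ℚ
  set B := CyclotomicField q ℚ
  set K := CyclotomicField r ℚ
  haveI : IsCyclotomicExtension {(p : ℕ)} ℚ A :=
    CyclotomicField.instIsCyclotomicExtensionSingletonNatSetOfCharZero _ ℚ
  haveI : IsCyclotomicExtension {(q : ℕ)} ℚ B :=
    CyclotomicField.instIsCyclotomicExtensionSingletonNatSetOfCharZero _ ℚ
  haveI : IsCyclotomicExtension {(r : ℕ)} ℚ K :=
    CyclotomicField.instIsCyclotomicExtensionSingletonNatSetOfCharZero _ ℚ
  have hζ : IsPrimitiveRoot (zeta r ℚ K) (m * n) := zeta_spec r ℚ K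
  set ζ : K := zeta r ℚ K
  have hζm : IsPrimitiveRoot (ζ ^ n) m := hζ.pow (Nat.mul_pos hm hn) (mul_comm m n)
  have hζn : IsPrimitiveRoot (ζ ^ m) n := hζ.pow (Nat.mul_pos hm hn) rfl
  have hζp : IsPrimitiveRoot (zeta p ℚ A) (p : ℕ) := zeta_spec p ℚ A
  have hζq : IsPrimitiveRoot (zeta q ℚ B) (q : ℕ) := zeta_spec q ℚ B
  have hirr_p : Irreducible (cyclotomic (p : ℕ) ℚ) := cyclotomic.irreducible_rat p.pos
  have hirr_q : Irreducible (cyclotomic (q : ℕ) ℚ) := cyclotomic.irreducible_rat q.pos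
  have hirr_r : Irreducible (cyclotomic (r : ℕ) ℚ) := cyclotomic.irreducible_rat r.pos
  -- algebra maps into K
  have haev : ∀ (k : ℕ+) (L : Type) [Field L] [Algebra ℚ L] (hk : Irreducible (cyclotomic (k:ℕ) ℚ))
      (ξ : L) (hξ : IsPrimitiveRoot ξ (k : ℕ)) (x : K), IsPrimitiveRoot x (k : ℕ) →
      (aeval x) (minpoly ℚ ξ) = 0 := by
    intro k L _ _ hk ξ hξ x hx
    rw [← hξ.minpoly_eq_cyclotomic_of_irreducible hk]
    have := (Polynomial.isRoot_cyclotomic_iff (R := K) (n := (k : ℕ))).mpr hx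
    rwa [IsRoot.def, ← Polynomial.map_cyclotomic (n := (k:ℕ)) (algebraMap ℚ K),
      Polynomial.eval_map, ← Polynomial.aeval_def] at this
  set pbA := hζp.powerBasis ℚ with hpbA
  set pbB := hζq.powerBasis ℚ with hpbB
  have hA0 : (aeval (ζ ^ n)) (minpoly ℚ pbA.gen) = 0 := by
    rw [hζp.powerBasis_gen ℚ]
    exact haev p A hirr_p _ hζp _ hζm
  have hB0 : (aeval (ζ ^ m)) (minpoly ℚ pbB.gen) = 0 := by
    rw [hζq.powerBasis_gen ℚ]
    exact haev q B hirr_q _ hζq _ hζn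
  set fA : A →ₐ[ℚ] K := pbA.lift (ζ ^ n) hA0
  set fB : B →ₐ[ℚ] K := pbB.lift (ζ ^ m) hB0
  set f : (A ⊗[ℚ] B) →ₐ[ℚ] K :=
    Algebra.TensorProduct.productMap fA fB
  have hfA : fA (zeta p ℚ A) = ζ ^ n := by
    have := pbA.lift_gen (ζ ^ n) hA0
    rwa [hζp.powerBasis_gen ℚ] at this
  have hfB : fB (zeta q ℚ B) = ζ ^ m := by
    have := pbB.lift_gen (ζ ^ m) hB0
    rwa [hζq.powerBasis_gen ℚ] at this
  -- surjectivity
  have hcop : Nat.Coprime (n + m) (m * n) := by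
    have h1 : Nat.Coprime (n + m) m := by
      simpa [Nat.coprime_comm] using (Nat.coprime_add_self_left (m := n) (n := m)).mpr h.symm
    have h2 : Nat.Coprime (n + m) n := by
      simpa using (Nat.coprime_add_self_right (m := m) (n := n)).mpr h
    exact Nat.Coprime.mul_right h1 h2
  have hprim : IsPrimitiveRoot (ζ ^ (n + m)) (m * n) := hζ.pow_of_coprime _ hcop
  have hsurj : Function.Surjective f := by
    rw [← AlgHom.range_eq_top]
    have htop : Algebra.adjoin ℚ ({ζ ^ (n + m)} : Set K) = ⊤ :=
      adjoin_primitive_root_eq_top (n := r) hprim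
    rw [_root_.eq_top_iff, ← htop]
    apply Algebra.adjoin_le
    rintro x rfl
    refine ⟨zeta p ℚ A ⊗ₜ zeta q ℚ B, ?_⟩
    simp [f, Algebra.TensorProduct.productMap_apply_tmul, hfA, hfB, pow_add]
  -- finrank equality
  haveI : FiniteDimensional ℚ A := IsCyclotomicExtension.finiteDimensional {(p : ℕ)} ℚ A
  haveI : FiniteDimensional ℚ B := IsCyclotomicExtension.finiteDimensional {(q : ℕ)} ℚ B
  haveI : FiniteDimensional ℚ K := IsCyclotomicExtension.finiteDimensional {(r : ℕ)} ℚ K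
  have hrk : finrank ℚ (A ⊗[ℚ] B) = finrank ℚ K := by
    rw [finrank_tensorProduct, IsCyclotomicExtension.finrank A hirr_p,
      IsCyclotomicExtension.finrank B hirr_q, IsCyclotomicExtension.finrank K hirr_r]
    exact (Nat.totient_mul h).symm
  have hinj : Function.Injective f :=
    (LinearMap.injective_iff_surjective_of_finrank_eq_finrank (f := f.toLinearMap) hrk).mpr hsurj
  exact ⟨AlgEquiv.ofBijective f ⟨hinj, hsurj⟩⟩
end

section
/- Consider the CDGA D over ℚ given by ℚ[γ, γ̄] ⊗ E(y) with |γ| = 2, |γ̄| = −2, |y| = 1, and differential d(y) = γγ̄ − 1 (and d(γ) = d(γ̄) = 0). Then the homology of D is isomorphic as a graded ℚ-algebra to the Laurent polynomial ring ℚ[β, β⁻¹] with |β| = 2, where β is the class of γ. -/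
noncomputable section KUaux

open MvPolynomial LaurentPolynomial

namespace KUaux

abbrev Rp := MvPolynomial (Fin 2) ℚ
abbrev I : Ideal Rp := Ideal.span {(X 0 * X 1 - 1 : Rp)}
abbrev Q := Rp ⧸ I

lemma mk_mul_eq_one : (Ideal.Quotient.mk I (X 0)) * (Ideal.Quotient.mk I (X 1)) = 1 := by
  rw [← map_mul, ← map_one (Ideal.Quotient.mk I), Ideal.Quotient.mk_eq_mk_iff_sub_mem]
  exact Ideal.subset_span rfl

def uQ : Qˣ where
  val := Ideal.Quotient.mk I (X 0)
  inv := Ideal.Quotient.mk I (X 1)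
  val_inv := mk_mul_eq_one
  inv_val := by rw [mul_comm]; exact mk_mul_eq_one

def Tu : (LaurentPolynomial ℚ)ˣ where
  val := T 1
  inv := T (-1)
  val_inv := by rw [← T_add]; norm_num
  inv_val := by rw [← T_add]; norm_num

lemma Tu_zpow (n : ℤ) : ((Tu ^ n : (LaurentPolynomial ℚ)ˣ) : LaurentPolynomial ℚ) = T n := by
  induction n using Int.induction_on with
  | zero => simp [T_zero]
  | succ k ih => rw [zpow_add_one, Units.val_mul, ih]; show _ * Tu.val = _; rw [Tu, ← T_add]
  | pred k ih => rw [zpow_sub_one, Units.val_mul, ih]; show _ * Tu⁻¹.val = _;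
                 show _ * Tu.inv = _;
                 rw [Tu]; rw [← T_add, show (-(k:ℤ) + -1) = -(k:ℤ) - 1 by ring]

def φ₀ : Rp →ₐ[ℚ] LaurentPolynomial ℚ := aeval ![T 1, T (-1)]

lemma φ₀_ker : ∀ a ∈ I, φ₀ a = 0 := by
  intro a ha
  rw [Ideal.mem_span_singleton] at ha
  obtain ⟨c, rfl⟩ := ha
  rw [map_mul]
  convert zero_mul (φ₀ c)
  rw [show φ₀ = aeval ![T 1, T (-1)] from rfl, map_sub, map_mul, map_one, aeval_X, aeval_X]
  rw [show (![T 1, T (-1)] : Fin 2 → LaurentPolynomial ℚ) 0 = T 1 from rfl,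
    show (![T 1, T (-1)] : Fin 2 → LaurentPolynomial ℚ) 1 = T (-1) from rfl, ← T_add]
  norm_num

def φ : Q →ₐ[ℚ] LaurentPolynomial ℚ := Ideal.Quotient.liftₐ I φ₀ φ₀_ker

lemma φ_mk0 : φ (Ideal.Quotient.mk I (X 0)) = T 1 := by show φ₀ (X 0) = T 1; simp [φ₀]
lemma φ_mk1 : φ (Ideal.Quotient.mk I (X 1)) = T (-1) := by show φ₀ (X 1) = T (-1); simp [φ₀]

def ψ : LaurentPolynomial ℚ →ₐ[ℚ] Q :=
  AddMonoidAlgebra.lift ℚ Q ℤ ((Units.coeHom Q).comp (zpowersHom Qˣ uQ))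

lemma ψ_T (n : ℤ) : ψ (T n) = ((uQ ^ n : Qˣ) : Q) := by
  show (AddMonoidAlgebra.lift ℚ Q ℤ ((Units.coeHom Q).comp (zpowersHom Qˣ uQ)))
      (AddMonoidAlgebra.single n (1:ℚ)) = _
  rw [AddMonoidAlgebra.lift_single, one_smul]
  rfl

lemma comp1 : φ.comp ψ = AlgHom.id ℚ (LaurentPolynomial ℚ) := by
  apply AddMonoidAlgebra.algHom_ext
  intro n
  have : ((AddMonoidAlgebra.single n (1:ℚ)) : LaurentPolynomial ℚ) = T n := rfl
  rw [this]
  simp only [AlgHom.comp_apply, AlgHom.id_apply, ψ_T]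
  have : φ ((uQ ^ n : Qˣ) : Q) = (((Units.map (φ : Q →* LaurentPolynomial ℚ)) (uQ ^ n) :
      (LaurentPolynomial ℚ)ˣ) : LaurentPolynomial ℚ) := rfl
  rw [this, map_zpow]
  have hu : Units.map (φ : Q →* LaurentPolynomial ℚ) uQ = Tu := by
    apply Units.ext
    exact φ_mk0
  rw [hu, Tu_zpow]
  exact Subsingleton.elim _ _

lemma comp2 : ψ.comp φ = AlgHom.id ℚ Q := by
  apply Ideal.Quotient.algHom_ext
  apply MvPolynomial.algHom_ext
  intro i
  fin_cases i
  · show ψ (φ (Ideal.Quotient.mk I (X 0))) = Ideal.Quotient.mk I (X 0)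
    rw [φ_mk0, ψ_T]
    norm_num
    rfl
  · show ψ (φ (Ideal.Quotient.mk I (X 1))) = Ideal.Quotient.mk I (X 1)
    rw [φ_mk1, ψ_T]
    show ((uQ ^ (-1:ℤ) : Qˣ) : Q) = _
    rw [zpow_neg_one]
    rfl

lemma p_ne_zero : (X 0 * X 1 - 1 : Rp) ≠ 0 := by
  intro h
  have := congrArg (constantCoeff (σ := Fin 2) (R := ℚ)) h
  simp at this

end KUaux

end KUaux

open MvPolynomial in
/-- Consider the CDGA `D = ℚ[γ, γ̄] ⊗ E(y)` with `|γ| = 2`, `|γ̄| = −2`,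
`|y| = 1` and differential `d(y) = γγ̄ − 1`, `d(γ) = d(γ̄) = 0`.  (We model the underlying
algebra as the dual numbers `R[y]/(y²)` over `R = ℚ[γ, γ̄]`, with `γ = X 0`, `γ̄ = X 1`, so
that `d(r + s·y) = s·(γγ̄ − 1)`.)  Then the homology of `D` is the Laurent polynomial ring
`ℚ[β, β⁻¹]` with `|β| = 2` and `β` the class of `γ`: the cycles are exactly the even part
`R`, the boundaries are exactly the ideal `(γγ̄ − 1) ⊆ R`, and there is a `ℚ`-algebra
isomorphism `R/(γγ̄ − 1) ≅ ℚ[β, β⁻¹]` sending the class of `γ` to `β` (of degree `2`) and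
the class of `γ̄` to `β⁻¹` (of degree `−2`). -/
theorem homology_of_KU_cell (d : DualNumber (MvPolynomial (Fin 2) ℚ) →ₗ[ℚ]
      DualNumber (MvPolynomial (Fin 2) ℚ))
    (hd : ∀ x : DualNumber (MvPolynomial (Fin 2) ℚ),
      d x = TrivSqZeroExt.inl (x.snd * (X 0 * X 1 - 1))) :
    (∀ x : DualNumber (MvPolynomial (Fin 2) ℚ), d x = 0 ↔ x.snd = 0) ∧
    (∀ x : DualNumber (MvPolynomial (Fin 2) ℚ), (∃ b, d b = x) ↔
      (x.snd = 0 ∧ x.fst ∈ Ideal.span {(X 0 * X 1 - 1 : MvPolynomial (Fin 2) ℚ)})) ∧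
    ∃ e : (MvPolynomial (Fin 2) ℚ ⧸
        Ideal.span {(X 0 * X 1 - 1 : MvPolynomial (Fin 2) ℚ)}) ≃ₐ[ℚ] LaurentPolynomial ℚ,
      e (Ideal.Quotient.mk _ (X 0)) = LaurentPolynomial.T 1 ∧
      e (Ideal.Quotient.mk _ (X 1)) = LaurentPolynomial.T (-1) := by
  refine ⟨?_, ?_, ?_⟩
  · intro x
    rw [hd x]
    constructor
    · intro h
      have h' : x.snd * (X 0 * X 1 - 1) = 0 := by
        have := congrArg TrivSqZeroExt.fst h
        simpa using this
      rcases mul_eq_zero.mp h' with h'' | h''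
      · exact h''
      · exact absurd h'' KUaux.p_ne_zero
    · intro h
      rw [h, zero_mul]
      rfl
  · intro x
    constructor
    · rintro ⟨b, hb⟩
      rw [hd b] at hb
      constructor
      · rw [← hb]; rfl
      · rw [← hb]
        show b.snd * (X 0 * X 1 - 1) ∈ _
        exact Ideal.mem_span_singleton.mpr (Dvd.intro_left _ rfl)
    · rintro ⟨h0, hm⟩
      obtain ⟨c, hc⟩ := Ideal.mem_span_singleton.mp hm
      refine ⟨TrivSqZeroExt.inr c, ?_⟩
      rw [hd]
      apply TrivSqZeroExt.ext
      · show c * (X 0 * X 1 - 1) = x.fst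
        rw [hc]; ring
      · show (0 : MvPolynomial (Fin 2) ℚ) = x.snd
        exact h0.symm
  · refine ⟨AlgEquiv.ofAlgHom KUaux.φ KUaux.ψ KUaux.comp1 KUaux.comp2, ?_, ?_⟩
    · exact KUaux.φ_mk0
    · exact KUaux.φ_mk1
end

section
/- Let p be a prime and k ≥ 1. Consider the CDGA B over ℚ given by ℚ[x₁,…,x_k] ⊗ E(t₁,…,t_k) with all x_i in degree 0, all t_i in degree 1, and differential determined by d(t₁) = Φ_p(x₁) and d(t_r) = x_{r−1} − x_r^p for 2 ≤ r ≤ k. Then H_i(B) = 0 for i ≠ 0 and H_0(B) ≅ ℚ(ζ_{p^k}). -/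
set_option synthInstance.maxHeartbeats 1000000
set_option maxHeartbeats 1000000
namespace KoszulHelper


open ExteriorAlgebra

variable {A : Type*} [CommRing A] {k : ℕ}

/-- Vectors supported on coordinates `< j`. -/
def Msub (A : Type*) [CommRing A] (k j : ℕ) : Submodule A (Fin k → A) where
  carrier := {m | ∀ l : Fin k, j ≤ (l : ℕ) → m l = 0}
  add_mem' := fun ha hb l hl => by simp [Pi.add_apply, ha l hl, hb l hl]
  zero_mem' := fun l _ => rfl
  smul_mem' := fun c m hm l hl => by simp [Pi.smul_apply, hm l hl]

lemma mem_Msub {j : ℕ} {m : Fin k → A} :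
    m ∈ Msub A k j ↔ ∀ l : Fin k, j ≤ (l : ℕ) → m l = 0 := Iff.rfl

lemma Msub_eq_top {j : ℕ} (hj : k ≤ j) : Msub A k j = ⊤ := by
  ext m
  simp only [Submodule.mem_top, iff_true, mem_Msub]
  intro l hl
  exact absurd l.isLt (not_lt.2 (hj.trans hl))

lemma Msub_mono {j j' : ℕ} (h : j ≤ j') : Msub A k j ≤ Msub A k j' :=
  fun m hm l hl => hm l (h.trans hl)

/-- Degree-one piece: image of `Msub` under `ι`. -/
abbrev Gsub (A : Type*) [CommRing A] (k j : ℕ) :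
    Submodule A (ExteriorAlgebra A (Fin k → A)) :=
  (Msub A k j).map (ι A)

lemma ι_anticomm (x y : Fin k → A) : ι A x * ι A y = -(ι A y * ι A x) :=
  eq_neg_of_add_eq_zero_left (ι_add_mul_swap x y)

lemma mul_mem_pow {S : Submodule A (Fin k → A)} {i : ℕ} {m : Fin k → A} (hm : m ∈ S)
    {x} (hx : x ∈ (S.map (ι A)) ^ i) : ι A m * x ∈ (S.map (ι A)) ^ (i + 1) := by
  rw [pow_succ']
  exact Submodule.mul_mem_mul ⟨m, hm, rfl⟩ hx

lemma Gsub_pow_mono {j j' i : ℕ} (h : j ≤ j') : Gsub A k j ^ i ≤ Gsub A k j' ^ i := by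
  induction i with
  | zero => simp
  | succ i ih =>
    rw [pow_succ', pow_succ']
    exact mul_le_mul' (Submodule.map_mono (Msub_mono h)) ih

lemma contract_mem (φ : Module.Dual A (Fin k → A)) {S : Submodule A (Fin k → A)}
    {i : ℕ} {x} (hx : x ∈ (S.map (ι A)) ^ i) :
    CliffordAlgebra.contractLeft φ x ∈ (S.map (ι A)) ^ (i - 1) := by
  refine Submodule.pow_induction_on_left' (M := S.map (ι A))
    (C := fun n y _ => CliffordAlgebra.contractLeft φ y ∈ (S.map (ι A)) ^ (n - 1))
    ?_ ?_ ?_ hx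
  · intro r
    rw [CliffordAlgebra.contractLeft_algebraMap]
    exact zero_mem _
  · intro x y i hx hy ihx ihy
    rw [map_add]; exact add_mem ihx ihy
  · rintro m ⟨v, hv, rfl⟩ n x hx ih
    rw [CliffordAlgebra.contractLeft_ι_mul]
    refine sub_mem (Submodule.smul_mem _ _ (by simpa using hx)) ?_
    cases n with
    | zero =>
      rw [pow_zero] at hx
      obtain ⟨r, rfl⟩ := Submodule.mem_one.mp hx
      rw [CliffordAlgebra.contractLeft_algebraMap, mul_zero]
      exact zero_mem _
    | succ n =>
      simpa using mul_mem_pow hv ih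

lemma contract_eq_zero (δ : Module.Dual A (Fin k → A)) {S : Submodule A (Fin k → A)}
    (hδ : ∀ m ∈ S, δ m = 0) {i : ℕ} {x} (hx : x ∈ (S.map (ι A)) ^ i) :
    CliffordAlgebra.contractLeft δ x = 0 := by
  refine Submodule.pow_induction_on_left (M := S.map (ι A)) ?_ ?_ ?_ hx
  · intro r; rw [CliffordAlgebra.contractLeft_algebraMap]
  · intro x y ihx ihy; rw [map_add, ihx, ihy, add_zero]
  · rintro m ⟨v, hv, rfl⟩ x ih
    rw [CliffordAlgebra.contractLeft_ι_mul, ih, mul_zero, sub_zero, hδ v hv, zero_smul]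

lemma decomp {j : ℕ} (hj : j < k) {i : ℕ} {x} (hx : x ∈ Gsub A k (j + 1) ^ i) :
    ∃ a b, a ∈ Gsub A k j ^ (i - 1) ∧ (i = 0 → a = 0) ∧ b ∈ Gsub A k j ^ i ∧
      x = ι A (Pi.single (⟨j, hj⟩ : Fin k) 1) * a + b := by
  set e : ExteriorAlgebra A (Fin k → A) := ι A (Pi.single (⟨j, hj⟩ : Fin k) 1) with he
  refine Submodule.pow_induction_on_left' (M := Gsub A k (j + 1))
    (C := fun n y _ => ∃ a b, a ∈ Gsub A k j ^ (n - 1) ∧ (n = 0 → a = 0) ∧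
      b ∈ Gsub A k j ^ n ∧ y = e * a + b) ?_ ?_ ?_ hx
  · intro r
    exact ⟨0, algebraMap _ _ r, zero_mem _, fun _ => rfl,
      by rw [pow_zero]; exact Submodule.mem_one.mpr ⟨r, rfl⟩, by rw [mul_zero, zero_add]⟩
  · rintro x y n hx hy ⟨a1, b1, ha1, ha01, hb1, rfl⟩ ⟨a2, b2, ha2, ha02, hb2, rfl⟩
    exact ⟨a1 + a2, b1 + b2, add_mem ha1 ha2,
      fun h => by rw [ha01 h, ha02 h, add_zero],
      add_mem hb1 hb2, by rw [mul_add]; abel⟩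
  · rintro m ⟨v, hv, rfl⟩ n x hx ⟨a, b, ha, ha0, hb, rfl⟩
    set sg : Fin k → A := Pi.single (⟨j, hj⟩ : Fin k) 1 with hsg
    have hw : v - v ⟨j, hj⟩ • sg ∈ Msub A k j := by
      intro l hl
      by_cases hlj : l = ⟨j, hj⟩
      · subst hlj; simp [hsg]
      · have hl' : j + 1 ≤ (l : ℕ) := by
          rcases lt_or_eq_of_le hl with h | h
          · omega
          · exact absurd (Fin.ext h.symm : l = ⟨j, hj⟩) hlj
        have := hv l hl'
        simp [hsg, this, Pi.single_apply, hlj]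
    set w : Fin k → A := v - v ⟨j, hj⟩ • sg with hwdef
    have hvsplit : ι A v = v ⟨j, hj⟩ • e + ι A w := by
      rw [hwdef, map_sub, map_smul, ← he]; abel
    have key : ι A v * (e * a + b) = e * (v ⟨j, hj⟩ • b - ι A w * a) + ι A w * b := by
      have h1 : e * e = 0 := by rw [he]; exact ι_sq_zero _
      have h2 : ι A w * e = -(e * ι A w) := by rw [he]; exact ι_anticomm _ _
      have h3 : (v ⟨j, hj⟩ • e) * (e * a) = 0 := by
        rw [smul_mul_assoc, ← mul_assoc, h1, zero_mul, smul_zero]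
      have h4 : ι A w * (e * a) = -(e * (ι A w * a)) := by
        rw [← mul_assoc, h2, neg_mul, mul_assoc]
      rw [hvsplit, add_mul, mul_add, mul_add, h3, h4, mul_sub, mul_smul_comm]
      simp only [smul_mul_assoc]
      abel
    refine ⟨v ⟨j, hj⟩ • b - ι A w * a, ι A w * b, ?_, by omega, ?_, key⟩
    · refine sub_mem (Submodule.smul_mem _ _ (by simpa using hb)) ?_
      cases n with
      | zero => rw [ha0 rfl, mul_zero]; exact zero_mem _
      | succ n => simpa using mul_mem_pow hw ha
    · exact mul_mem_pow hw hb

theorem koszul_exact (r : Fin k → A) (φ : Module.Dual A (Fin k → A))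
    (hφ : ∀ m : Fin k → A, φ m = ∑ l, m l * r l)
    (hreg : ∀ (j : ℕ) (hj : j < k) (a : A),
      r ⟨j, hj⟩ * a ∈ Submodule.map φ (Msub A k j) → a ∈ Submodule.map φ (Msub A k j)) :
    ∀ (j i : ℕ), ∀ x ∈ Gsub A k j ^ (i + 1), CliffordAlgebra.contractLeft φ x = 0 →
      ∃ y ∈ Gsub A k j ^ (i + 2), CliffordAlgebra.contractLeft φ y = x := by
  intro j
  induction j with
  | zero =>
    intro i x hx _
    have hMbot : Msub A k 0 = ⊥ := by
      ext m
      simp only [mem_Msub, Submodule.mem_bot]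
      constructor
      · intro h; funext l; exact h l (Nat.zero_le _)
      · rintro rfl l _; rfl
    have hGbot : Gsub A k 0 = ⊥ := by unfold Gsub; rw [hMbot, Submodule.map_bot]
    rw [hGbot, ← Submodule.zero_eq_bot, zero_pow (Nat.succ_ne_zero i),
      Submodule.zero_eq_bot, Submodule.mem_bot] at hx
    subst hx
    exact ⟨0, zero_mem _, map_zero _⟩
  | succ j ih =>
    by_cases hj : j < k
    swap
    · have hMs : Msub A k (j + 1) = Msub A k j := by
        rw [Msub_eq_top (le_of_not_gt hj),
          Msub_eq_top ((le_of_not_gt hj).trans (Nat.le_succ j))]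
      have hGs : Gsub A k (j + 1) = Gsub A k j := by unfold Gsub; rw [hMs]
      intro i x hx hdx
      rw [hGs] at hx
      obtain ⟨y, hy, hdy⟩ := ih i x hx hdx
      exact ⟨y, by rw [hGs]; exact hy, hdy⟩
    · intro i x hx hdx
      obtain ⟨a, b, ha, -, hb, rfl⟩ := decomp hj hx
      rw [Nat.add_sub_cancel] at ha
      set jf : Fin k := ⟨j, hj⟩ with hjf
      set sg : Fin k → A := Pi.single jf 1 with hsg
      set e : ExteriorAlgebra A (Fin k → A) := ι A sg with he
      have hφsg : φ sg = r jf := by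
        rw [hφ, Finset.sum_eq_single jf]
        · simp [hsg]
        · intro l _ hl; simp [hsg, Pi.single_apply, hl]
        · intro h; exact absurd (Finset.mem_univ _) h
      have hde : ∀ c, CliffordAlgebra.contractLeft φ (e * c)
          = r jf • c - e * CliffordAlgebra.contractLeft φ c := by
        intro c
        rw [he, CliffordAlgebra.contractLeft_ι_mul, hφsg]
      set δ : Module.Dual A (Fin k → A) := LinearMap.proj jf with hδ
      have hδ0 : ∀ m ∈ Msub A k j, δ m = 0 := fun m hm => hm jf le_rfl
      have hδsg : δ sg = 1 := by simp [hδ, hsg]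
      rw [map_add, hde a] at hdx
      have hda : CliffordAlgebra.contractLeft φ a = 0 := by
        have h5 := congrArg (CliffordAlgebra.contractLeft δ) hdx
        simp only [map_add, map_sub, map_smul, map_zero] at h5
        rw [contract_eq_zero δ hδ0 ha, contract_eq_zero δ hδ0 (contract_mem φ hb)] at h5
        rw [he, CliffordAlgebra.contractLeft_ι_mul, hδsg, one_smul,
          contract_eq_zero δ hδ0 (contract_mem φ ha), mul_zero, sub_zero] at h5
        simpa using h5
      have hc : ∃ c ∈ Gsub A k j ^ (i + 1), CliffordAlgebra.contractLeft φ c = a := by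
        cases i with
        | zero =>
          rw [pow_zero] at ha
          obtain ⟨a0, rfl⟩ := Submodule.mem_one.mp ha
          rw [pow_one] at hb
          obtain ⟨mb, hmb, rfl⟩ := hb
          rw [hda, mul_zero, sub_zero, CliffordAlgebra.contractLeft_ι,
            Algebra.smul_def, ← map_mul, ← map_add] at hdx
          have h0 : r jf * a0 + φ mb = 0 :=
            (ExteriorAlgebra.algebraMap_leftInverse (Fin k → A)).injective
              (by rw [hdx, map_zero])
          have hmem : r jf * a0 ∈ Submodule.map φ (Msub A k j) := by
            refine ⟨-mb, neg_mem hmb, ?_⟩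
            rw [map_neg]
            exact neg_eq_of_add_eq_zero_left h0
          obtain ⟨mc, hmc, hφmc⟩ := hreg j hj a0 hmem
          refine ⟨ι A mc, by rw [pow_one]; exact ⟨mc, hmc, rfl⟩, ?_⟩
          rw [CliffordAlgebra.contractLeft_ι, hφmc]
        | succ i' =>
          exact ih i' a ha hda
      obtain ⟨c, hcmem, hdc⟩ := hc
      have hx' : b + r jf • c ∈ Gsub A k j ^ (i + 1) :=
        add_mem hb (Submodule.smul_mem _ _ hcmem)
      have heq : b + r jf • c = (e * a + b) + CliffordAlgebra.contractLeft φ (e * c) := by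
        rw [hde, hdc]; abel
      have hdx' : CliffordAlgebra.contractLeft φ (b + r jf • c) = 0 := by
        rw [heq, map_add, CliffordAlgebra.contractLeft_contractLeft, add_zero,
          map_add, hde a]
        exact hdx
      obtain ⟨y', hy', hdy'⟩ := ih i (b + r jf • c) hx' hdx'
      have hsgmem : sg ∈ Msub A k (j + 1) := by
        intro l hl
        have hne : l ≠ jf := by
          intro hcon
          rw [hcon] at hl
          simp only [hjf] at hl
          omega
        simp [hsg, Pi.single_apply, hne]
      refine ⟨y' - e * c, ?_, ?_⟩
      · refine sub_mem (Gsub_pow_mono (Nat.le_succ j) hy') ?_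
        exact mul_mem_pow hsgmem (Gsub_pow_mono (Nat.le_succ j) hcmem)
      · rw [map_sub, hdy', heq]
        exact add_sub_cancel_right _ _


open MvPolynomial


open MvPolynomial

section Cyclo

variable {p k : ℕ}

/-- iterated expand of the `p`-th cyclotomic polynomial -/
lemma expand_cyclotomic (hp : p.Prime) :
    ∀ j : ℕ, Polynomial.expand ℚ (p ^ j) (Polynomial.cyclotomic p ℚ)
      = Polynomial.cyclotomic (p ^ (j + 1)) ℚ := by
  intro j
  induction j with
  | zero => simp
  | succ j ih =>
    have h1 : Polynomial.expand ℚ p (Polynomial.cyclotomic (p ^ (j + 1)) ℚ)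
        = Polynomial.cyclotomic (p ^ (j + 2)) ℚ := by
      rw [Polynomial.cyclotomic_expand_eq_cyclotomic hp
        (dvd_pow_self p (Nat.succ_ne_zero j)), ← pow_succ]
    rw [← h1, ← ih, Polynomial.expand_expand, ← pow_succ']

variable (r : Fin k → MvPolynomial (Fin k) ℚ)

/-- The ideal generated by the first `j` relations. -/
noncomputable def Ij (j : ℕ) : Ideal (MvPolynomial (Fin k) ℚ) :=
  Ideal.span (r '' {l : Fin k | (l : ℕ) < j})

lemma keyL
    (hrs : ∀ i : Fin k, ∀ _ : 0 < (i : ℕ),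
      r i = X (⟨(i : ℕ) - 1, lt_of_le_of_lt (Nat.sub_le _ _) i.isLt⟩ : Fin k) - X i ^ p)
    (j : ℕ) (hj1 : 1 ≤ j) (hjk : j ≤ k) :
    ∀ (n : ℕ) (l : Fin k), (l : ℕ) + n = j - 1 →
      (X l : MvPolynomial (Fin k) ℚ) - X (⟨j - 1, by omega⟩ : Fin k) ^ (p ^ n) ∈ Ij r j := by
  intro n
  induction n with
  | zero =>
    intro l hl
    have hlj : l = (⟨j - 1, by omega⟩ : Fin k) := Fin.ext (by show (l : ℕ) = j - 1; omega)
    rw [hlj, pow_zero, pow_one, sub_self]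
    exact zero_mem _
  | succ n ih =>
    intro l hl
    have hl1k : (l : ℕ) + 1 < k := by omega
    set l1 : Fin k := ⟨(l : ℕ) + 1, hl1k⟩ with hl1
    have hidx : (⟨((l1 : ℕ)) - 1, lt_of_le_of_lt (Nat.sub_le _ _) l1.isLt⟩ : Fin k) = l :=
      Fin.ext (by show (l : ℕ) + 1 - 1 = (l : ℕ); omega)
    have hrl1 : r l1 = X l - X l1 ^ p := by
      rw [hrs l1 (by show 0 < (l : ℕ) + 1; omega), hidx]
    have hmem1 : r l1 ∈ Ij r j :=
      Ideal.subset_span ⟨l1, by show ((l : ℕ) + 1) < j; omega, rfl⟩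
    obtain ⟨c, hc⟩ := sub_dvd_pow_sub_pow (X l1 : MvPolynomial (Fin k) ℚ)
      (X (⟨j - 1, by omega⟩ : Fin k) ^ (p ^ n)) p
    have hihm := ih l1 (by show ((l : ℕ) + 1) + n = j - 1; omega)
    have hsplit : (X l : MvPolynomial (Fin k) ℚ)
        - X (⟨j - 1, by omega⟩ : Fin k) ^ (p ^ (n + 1))
        = r l1 + (X l1 - X (⟨j - 1, by omega⟩ : Fin k) ^ (p ^ n)) * c := by
      rw [hrl1, ← hc, ← pow_mul, ← pow_succ]
      ring
    rw [hsplit]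
    exact add_mem hmem1 (Ideal.mul_mem_right _ _ hihm)

/-- divisibility of aeval differences -/
lemma aeval_sub_dvd {R : Type*} [CommRing R] [Algebra ℚ R] (a b : R) (f : Polynomial ℚ) :
    a - b ∣ Polynomial.aeval a f - Polynomial.aeval b f := by
  have h1 : Polynomial.aeval a f = (f.map (algebraMap ℚ R)).eval a := by
    rw [Polynomial.eval_map, Polynomial.aeval_def]
  have h2 : Polynomial.aeval b f = (f.map (algebraMap ℚ R)).eval b := by
    rw [Polynomial.eval_map, Polynomial.aeval_def]
  rw [h1, h2]
  exact Polynomial.sub_dvd_eval_sub a b _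

/-- generic vanishing of the first `j` relations under a suitable evaluation -/
lemma psi_r_zero (hp : p.Prime)
    (hr0 : ∀ i : Fin k, (i : ℕ) = 0 →
      r i = Polynomial.aeval (X i) (Polynomial.cyclotomic p ℚ))
    (hrs : ∀ i : Fin k, ∀ _ : 0 < (i : ℕ),
      r i = X (⟨(i : ℕ) - 1, lt_of_le_of_lt (Nat.sub_le _ _) i.isLt⟩ : Fin k) - X i ^ p)
    {T : Type*} [CommRing T] [Algebra ℚ T] (j : ℕ) (hj1 : 1 ≤ j)
    (u : T) (g : Fin k → T)
    (hg : ∀ l : Fin k, (l : ℕ) < j → g l = u ^ (p ^ (j - 1 - (l : ℕ))))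
    (hu : Polynomial.aeval u (Polynomial.cyclotomic (p ^ j) ℚ) = 0) :
    ∀ l : Fin k, (l : ℕ) < j → aeval g (r l) = 0 := by
  intro l hl
  rcases Nat.eq_zero_or_pos (l : ℕ) with h0 | h0
  · rw [hr0 l h0, ← Polynomial.aeval_algHom_apply, aeval_X, hg l hl]
    have he : j - 1 - (l : ℕ) = j - 1 := by omega
    rw [he, ← Polynomial.expand_aeval (p ^ (j - 1)) (Polynomial.cyclotomic p ℚ) u,
      expand_cyclotomic hp (j - 1)]
    have hj : j - 1 + 1 = j := by omega
    rw [hj]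
    exact hu
  · rw [hrs l h0, map_sub, map_pow, aeval_X, aeval_X]
    have hlm : ((⟨(l : ℕ) - 1, lt_of_le_of_lt (Nat.sub_le _ _) l.isLt⟩ : Fin k) : ℕ) < j := by
      show (l : ℕ) - 1 < j
      omega
    rw [hg _ hlm, hg l hl, ← pow_mul]
    have he : p ^ (j - 1 - ((⟨(l : ℕ) - 1, lt_of_le_of_lt (Nat.sub_le _ _) l.isLt⟩ : Fin k) : ℕ))
        = p ^ (j - 1 - (l : ℕ)) * p := by
      rw [← pow_succ]
      congr 1
      show j - 1 - ((l : ℕ) - 1) = (j - 1 - (l : ℕ)) + 1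
      omega
    rw [he, sub_self]


lemma cyclo_mem (hp : p.Prime)
    (hr0 : ∀ i : Fin k, (i : ℕ) = 0 →
      r i = Polynomial.aeval (X i) (Polynomial.cyclotomic p ℚ))
    (hrs : ∀ i : Fin k, ∀ _ : 0 < (i : ℕ),
      r i = X (⟨(i : ℕ) - 1, lt_of_le_of_lt (Nat.sub_le _ _) i.isLt⟩ : Fin k) - X i ^ p)
    (j : ℕ) (hj1 : 1 ≤ j) (hjk : j ≤ k) :
    Polynomial.aeval (X (⟨j - 1, by omega⟩ : Fin k) : MvPolynomial (Fin k) ℚ)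
      (Polynomial.cyclotomic (p ^ j) ℚ) ∈ Ij r j := by
  have hl0k : 0 < k := by omega
  set l0 : Fin k := ⟨0, hl0k⟩ with hl0
  set Xj : MvPolynomial (Fin k) ℚ := X (⟨j - 1, by omega⟩ : Fin k) with hXj
  have h1 : Polynomial.aeval Xj (Polynomial.cyclotomic (p ^ j) ℚ)
      = Polynomial.aeval (Xj ^ (p ^ (j - 1))) (Polynomial.cyclotomic p ℚ) := by
    have hje : (j - 1) + 1 = j := by omega
    rw [← Polynomial.expand_aeval (p ^ (j - 1)) (Polynomial.cyclotomic p ℚ) Xj,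
      expand_cyclotomic hp (j - 1), hje]
  obtain ⟨c, hc⟩ := aeval_sub_dvd (Xj ^ (p ^ (j - 1))) (X l0 : MvPolynomial (Fin k) ℚ)
    (Polynomial.cyclotomic p ℚ)
  have hXmem : Xj ^ (p ^ (j - 1)) - X l0 ∈ Ij r j := by
    have h2 := keyL r hrs j hj1 hjk (j - 1) l0 (by show 0 + (j - 1) = j - 1; omega)
    have h3 := neg_mem h2
    rw [neg_sub] at h3
    exact h3
  have hrl0 : Polynomial.aeval (X l0 : MvPolynomial (Fin k) ℚ) (Polynomial.cyclotomic p ℚ)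
      = r l0 := (hr0 l0 rfl).symm
  have hr0mem : r l0 ∈ Ij r j := Ideal.subset_span ⟨l0, by show (0 : ℕ) < j; omega, rfl⟩
  have h4 : Polynomial.aeval (Xj ^ (p ^ (j - 1))) (Polynomial.cyclotomic p ℚ)
      = (Xj ^ (p ^ (j - 1)) - X l0) * c + r l0 := by
    rw [← hrl0, ← hc]; ring
  rw [h1, h4]
  exact add_mem (Ideal.mul_mem_right _ _ hXmem) hr0mem

/-- the lift of the cyclotomic field into the quotient -/
lemma lift_exists (hp : p.Prime)
    (hr0 : ∀ i : Fin k, (i : ℕ) = 0 →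
      r i = Polynomial.aeval (X i) (Polynomial.cyclotomic p ℚ))
    (hrs : ∀ i : Fin k, ∀ _ : 0 < (i : ℕ),
      r i = X (⟨(i : ℕ) - 1, lt_of_le_of_lt (Nat.sub_le _ _) i.isLt⟩ : Fin k) - X i ^ p)
    (j : ℕ) (hj1 : 1 ≤ j) (hjk : j ≤ k) :
    ∃ lift₁ : AdjoinRoot (Polynomial.cyclotomic (p ^ j) ℚ) →ₐ[ℚ]
        (MvPolynomial (Fin k) ℚ ⧸ Ij r j),
      ∀ (n : ℕ) (l : Fin k), (l : ℕ) + n = j - 1 →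
        lift₁ (AdjoinRoot.root _ ^ (p ^ n)) = Ideal.Quotient.mk (Ij r j) (X l) := by
  have hroot : Polynomial.aeval
      ((Ideal.Quotient.mkₐ ℚ (Ij r j)) (X (⟨j - 1, by omega⟩ : Fin k)))
      (Polynomial.cyclotomic (p ^ j) ℚ) = 0 := by
    rw [Polynomial.aeval_algHom_apply, Ideal.Quotient.mkₐ_eq_mk,
      Ideal.Quotient.eq_zero_iff_mem]
    exact cyclo_mem r hp hr0 hrs j hj1 hjk
  refine ⟨AdjoinRoot.liftAlgHom _ (Algebra.ofId ℚ _) _ (by rw [← hroot]; rfl), ?_⟩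
  intro n l hl
  rw [map_pow, AdjoinRoot.liftAlgHom_root, Ideal.Quotient.mkₐ_eq_mk, ← map_pow,
    Ideal.Quotient.mk_eq_mk_iff_sub_mem]
  have h2 := keyL r hrs j hj1 hjk n l hl
  have h3 := neg_mem h2
  rw [neg_sub] at h3
  exact h3

/-- regularity for `1 ≤ j < k`. -/
lemma reg_pos (hp : p.Prime)
    (hr0 : ∀ i : Fin k, (i : ℕ) = 0 →
      r i = Polynomial.aeval (X i) (Polynomial.cyclotomic p ℚ))
    (hrs : ∀ i : Fin k, ∀ _ : 0 < (i : ℕ),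
      r i = X (⟨(i : ℕ) - 1, lt_of_le_of_lt (Nat.sub_le _ _) i.isLt⟩ : Fin k) - X i ^ p)
    (j : ℕ) (hj1 : 1 ≤ j) (hjk : j < k) (a : MvPolynomial (Fin k) ℚ)
    (ha : r ⟨j, hjk⟩ * a ∈ Ij r j) : a ∈ Ij r j := by
  haveI : Fact (Irreducible (Polynomial.cyclotomic (p ^ j) ℚ)) :=
    ⟨Polynomial.cyclotomic.irreducible_rat (pow_pos hp.pos j)⟩
  set F := AdjoinRoot (Polynomial.cyclotomic (p ^ j) ℚ) with hF
  set ρ : F := AdjoinRoot.root _ with hρ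
  set g : Fin k → MvPolynomial (Fin k) F := fun l =>
    if (l : ℕ) < j then (C ρ) ^ (p ^ (j - 1 - (l : ℕ))) else X l with hgdef
  set ψ : MvPolynomial (Fin k) ℚ →ₐ[ℚ] MvPolynomial (Fin k) F := aeval g with hψdef
  have hu : Polynomial.aeval (C ρ : MvPolynomial (Fin k) F)
      (Polynomial.cyclotomic (p ^ j) ℚ) = 0 := by
    have h0 : Polynomial.aeval ρ (Polynomial.cyclotomic (p ^ j) ℚ) = 0 := by
      rw [hρ, Polynomial.aeval_def, Subsingleton.elim (algebraMap ℚ F) (AdjoinRoot.of _),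
        AdjoinRoot.eval₂_root]
    rw [← MvPolynomial.algebraMap_eq, Polynomial.aeval_algebraMap_apply, h0, map_zero]
  have hψr : ∀ l : Fin k, (l : ℕ) < j → ψ (r l) = 0 :=
    psi_r_zero r hp hr0 hrs j hj1 (C ρ) g
      (fun l hl => by rw [hgdef]; simp only [hl, if_true]) hu
  have hIker : ∀ f ∈ Ij r j, ψ f = 0 := by
    intro f hf
    have hle : Ij r j ≤ RingHom.ker ψ.toRingHom := by
      rw [Ij, Ideal.span_le]
      rintro _ ⟨l, hl, rfl⟩
      exact hψr l hl
    exact hle hf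
  obtain ⟨lift₁, hlift⟩ := lift_exists r hp hr0 hrs j hj1 (le_of_lt hjk)
  set χ : MvPolynomial (Fin k) F →+* (MvPolynomial (Fin k) ℚ ⧸ Ij r j) :=
    eval₂Hom lift₁.toRingHom (fun l => Ideal.Quotient.mk (Ij r j) (X l)) with hχdef
  have hχψ : ∀ f, χ (ψ f) = Ideal.Quotient.mk (Ij r j) f := by
    intro f
    induction f using MvPolynomial.induction_on with
    | C q =>
      rw [hψdef, aeval_C]
      rw [IsScalarTower.algebraMap_apply ℚ F (MvPolynomial (Fin k) F),
        MvPolynomial.algebraMap_eq, hχdef]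
      rw [eval₂Hom_C]
      have : (lift₁.toRingHom) (algebraMap ℚ F q) = algebraMap ℚ _ q := lift₁.commutes q
      rw [this]
      rw [← Ideal.Quotient.mkₐ_eq_mk ℚ (Ij r j), ← (Ideal.Quotient.mkₐ ℚ (Ij r j)).commutes q]
      rfl
    | add f1 f2 ih1 ih2 => rw [map_add, map_add, ih1, ih2, map_add]
    | mul_X f1 l ih =>
      rw [map_mul, map_mul, ih, map_mul]
      congr 1
      rw [hψdef, aeval_X, hgdef]
      by_cases hl : (l : ℕ) < j
      · simp only [hl, if_true]
        rw [map_pow, hχdef, eval₂Hom_C]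
        show (lift₁ ρ) ^ (p ^ (j - 1 - (l : ℕ))) = _
        rw [← map_pow]
        exact hlift (j - 1 - (l : ℕ)) l (by omega)
      · simp only [hl, if_false]
        rw [hχdef]
        simp
  have hψrj : ψ (r ⟨j, hjk⟩) ≠ 0 := by
    have hidx : (⟨((⟨j, hjk⟩ : Fin k) : ℕ) - 1,
        lt_of_le_of_lt (Nat.sub_le _ _) (⟨j, hjk⟩ : Fin k).isLt⟩ : Fin k)
        = (⟨j - 1, by omega⟩ : Fin k) := rfl
    rw [hrs ⟨j, hjk⟩ (by show 0 < j; omega), hidx, map_sub, map_pow, hψdef, aeval_X, aeval_X,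
      hgdef]
    have hj1' : j - 1 < j := by omega
    have hjj : ¬ (j < j) := by omega
    simp only [show ((⟨j - 1, by omega⟩ : Fin k) : ℕ) = j - 1 from rfl,
      show ((⟨j, hjk⟩ : Fin k) : ℕ) = j from rfl, hj1', if_true, hjj, if_false]
    have he : j - 1 - (j - 1) = 0 := by omega
    rw [he, pow_zero, pow_one]
    intro hcon
    have := congrArg (coeff (Finsupp.single (⟨j, hjk⟩ : Fin k) p)) hcon
    rw [MvPolynomial.coeff_zero, coeff_sub, coeff_C, coeff_X_pow] at this
    simp only [if_pos rfl] at this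
    have hps : Finsupp.single (⟨j, hjk⟩ : Fin k) p ≠ 0 := by
      intro hz
      have := Finsupp.single_eq_zero.mp hz
      exact hp.ne_zero this
    rw [if_neg (by exact fun hcc => hps hcc.symm)] at this
    simp at this
  have hψa : ψ a = 0 := by
    have hmul : ψ (r ⟨j, hjk⟩) * ψ a = 0 := by
      rw [← map_mul]; exact hIker _ ha
    rcases mul_eq_zero.mp hmul with h | h
    · exact absurd h hψrj
    · exact h
  have := hχψ a
  rw [hψa, map_zero] at this
  rw [← Ideal.Quotient.eq_zero_iff_mem, ← this]


lemma reg_zero (hp : p.Prime) (hk : 0 < k)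
    (hr0 : ∀ i : Fin k, (i : ℕ) = 0 →
      r i = Polynomial.aeval (X i) (Polynomial.cyclotomic p ℚ))
    (a : MvPolynomial (Fin k) ℚ)
    (ha : r ⟨0, hk⟩ * a ∈ Ij r 0) : a ∈ Ij r 0 := by
  have hempty : Ij r 0 = ⊥ := by
    rw [Ij]
    have h0 : {l : Fin k | (l : ℕ) < 0} = ∅ := by ext l; simp
    rw [h0, Set.image_empty, Ideal.span_empty]
  rw [hempty, Ideal.mem_bot] at ha ⊢
  have hr0' : r ⟨0, hk⟩ ≠ 0 := by
    rw [hr0 ⟨0, hk⟩ rfl]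
    intro hcon
    have hemb := congrArg (fun f => (aeval (fun _ : Fin k => (Polynomial.X : Polynomial ℚ))) f) hcon
    simp only [map_zero] at hemb
    rw [← Polynomial.aeval_algHom_apply, aeval_X, Polynomial.aeval_X_left_apply] at hemb
    exact Polynomial.cyclotomic_ne_zero p ℚ hemb
  rcases mul_eq_zero.mp ha with h | h
  · exact absurd h hr0'
  · exact h

lemma quot_equiv (hp : p.Prime) (hk : 1 ≤ k)
    (hr0 : ∀ i : Fin k, (i : ℕ) = 0 →
      r i = Polynomial.aeval (X i) (Polynomial.cyclotomic p ℚ))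
    (hrs : ∀ i : Fin k, ∀ _ : 0 < (i : ℕ),
      r i = X (⟨(i : ℕ) - 1, lt_of_le_of_lt (Nat.sub_le _ _) i.isLt⟩ : Fin k) - X i ^ p) :
    Nonempty ((MvPolynomial (Fin k) ℚ ⧸ Ij r k) ≃ₐ[ℚ]
      AdjoinRoot (Polynomial.cyclotomic (p ^ k) ℚ)) := by
  set F := AdjoinRoot (Polynomial.cyclotomic (p ^ k) ℚ) with hF
  set ρ : F := AdjoinRoot.root _ with hρ
  set g : Fin k → F := fun l => ρ ^ (p ^ (k - 1 - (l : ℕ))) with hgdef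
  set Θ : MvPolynomial (Fin k) ℚ →ₐ[ℚ] F := aeval g with hΘdef
  have hu : Polynomial.aeval ρ (Polynomial.cyclotomic (p ^ k) ℚ) = 0 := by
    rw [hρ, AdjoinRoot.aeval_eq, AdjoinRoot.mk_self]
  have hΘr : ∀ l : Fin k, (l : ℕ) < k → Θ (r l) = 0 :=
    psi_r_zero r hp hr0 hrs k hk ρ g (fun l _ => rfl) hu
  have hIker : Ij r k ≤ RingHom.ker Θ.toRingHom := by
    rw [Ij, Ideal.span_le]
    rintro _ ⟨l, hl, rfl⟩
    exact hΘr l hl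
  obtain ⟨lift₁, hlift⟩ := lift_exists r hp hr0 hrs k hk le_rfl
  have hχΘ : ∀ f, lift₁ (Θ f) = Ideal.Quotient.mk (Ij r k) f := by
    intro f
    induction f using MvPolynomial.induction_on with
    | C q =>
      rw [hΘdef, aeval_C, lift₁.commutes q,
        ← Ideal.Quotient.mkₐ_eq_mk ℚ (Ij r k), ← (Ideal.Quotient.mkₐ ℚ (Ij r k)).commutes q,
        MvPolynomial.algebraMap_eq]
    | add f1 f2 ih1 ih2 => rw [map_add, map_add, ih1, ih2, map_add]
    | mul_X f1 l ih =>
      rw [map_mul, map_mul, ih, map_mul]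
      congr 1
      rw [hΘdef, aeval_X, hgdef]
      exact hlift (k - 1 - (l : ℕ)) l (by have := l.isLt; omega)
  have hker : RingHom.ker Θ.toRingHom = Ij r k := by
    refine le_antisymm ?_ hIker
    intro f hf
    have h1 := hχΘ f
    rw [show Θ f = 0 from hf, map_zero] at h1
    rw [← Ideal.Quotient.eq_zero_iff_mem, ← h1]
  have hsurj : Function.Surjective Θ := by
    have hrange : Θ.range = ⊤ := by
      rw [eq_top_iff, ← AdjoinRoot.adjoinRoot_eq_top (f := Polynomial.cyclotomic (p ^ k) ℚ)]
      rw [Algebra.adjoin_le_iff]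
      intro x hx
      rw [Set.mem_singleton_iff] at hx
      subst hx
      have hXval : Θ (X (⟨k - 1, by omega⟩ : Fin k)) = ρ := by
        rw [hΘdef, aeval_X, hgdef]
        show ρ ^ (p ^ (k - 1 - (k - 1))) = _
        rw [Nat.sub_self, pow_zero, pow_one]
      show ρ ∈ Θ.range
      exact ⟨X (⟨k - 1, by omega⟩ : Fin k), hXval⟩
    intro y
    have hy : y ∈ Θ.range := by rw [hrange]; trivial
    obtain ⟨x, hx⟩ := hy
    exact ⟨x, hx⟩
  exact ⟨(Ideal.quotientEquivAlgOfEq ℚ hker.symm).trans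
    (Ideal.quotientKerAlgEquivOfSurjective hsurj)⟩

lemma span_range_eq : Ideal.span (Set.range r) = Ij r k := by
  rw [Ij]
  have h2 : {l : Fin k | (l : ℕ) < k} = Set.univ := by
    ext l; simp [l.isLt]
  rw [h2, Set.image_univ]

end Cyclo


open MvPolynomial in
lemma map_phi_eq {k : ℕ} (r : Fin k → MvPolynomial (Fin k) ℚ)
    (φ : Module.Dual (MvPolynomial (Fin k) ℚ) (Fin k → MvPolynomial (Fin k) ℚ))
    (hφ : ∀ m : Fin k → MvPolynomial (Fin k) ℚ, φ m = ∑ l, m l * r l) (j : ℕ) :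
    Submodule.map φ (Msub (MvPolynomial (Fin k) ℚ) k j) = Ij r j := by
  apply le_antisymm
  · rintro _ ⟨m, hm, rfl⟩
    rw [hφ]
    refine Ideal.sum_mem _ fun l _ => ?_
    by_cases hl : (l : ℕ) < j
    · exact Ideal.mul_mem_left _ _ (Ideal.subset_span ⟨l, hl, rfl⟩)
    · rw [hm l (not_lt.1 hl), zero_mul]
      exact zero_mem _
  · rw [Ij, Ideal.span_le]
    rintro _ ⟨l, hl, rfl⟩
    refine Submodule.mem_map.mpr ⟨Pi.single l 1, ?_, ?_⟩
    · intro l' hl'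
      have hne : l' ≠ l := by
        intro hcon
        subst hcon
        exact absurd hl (not_lt.2 hl')
      simp [Pi.single_apply, hne]
    · rw [hφ, Finset.sum_eq_single l]
      · simp
      · intro l' _ hne
        simp [Pi.single_apply, hne]
      · intro h
        exact absurd (Finset.mem_univ _) h

end KoszulHelper


open MvPolynomial in
/-- Let `p` be a prime and `k ≥ 1`.  Consider the Koszul complex
`B = ℚ[x₁,…,x_k] ⊗ E(t₁,…,t_k)` on the sequence `(Φ_p(x₁), x₁ − x₂^p, …, x_{k−1} − x_k^p)`,
with the `x_i` in degree `0`, the `t_i` in degree `1`, and differential determined by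
`d(t₁) = Φ_p(x₁)` and `d(t_r) = x_{r−1} − x_r^p`.  (We model `B` as the exterior algebra
over `R = ℚ[x₁,…,x_k]` on the free module `M = R^k`, with degree-`i` piece the span of
`i`-fold products of generators, and with `d` the contraction against the dual element `φ`
sending the `i`-th exterior generator to the `i`-th relation.)  Then `H_i(B) = 0` for
`i ≠ 0`, the boundaries in degree `0` form the ideal generated by the relations, and
`H_0(B) ≅ ℚ(ζ_{p^k})`. -/
theorem koszul_complex_homology (p k : ℕ) (hp : p.Prime) (hk : 1 ≤ k)
    (r : Fin k → MvPolynomial (Fin k) ℚ)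
    (hr0 : ∀ i : Fin k, (i : ℕ) = 0 →
      r i = Polynomial.aeval (X i) (Polynomial.cyclotomic p ℚ))
    (hrs : ∀ i : Fin k, ∀ _ : 0 < (i : ℕ),
      r i = X (⟨(i : ℕ) - 1, lt_of_le_of_lt (Nat.sub_le _ _) i.isLt⟩ : Fin k) - X i ^ p)
    (φ : Module.Dual (MvPolynomial (Fin k) ℚ) (Fin k → MvPolynomial (Fin k) ℚ))
    (hφ : ∀ m : Fin k → MvPolynomial (Fin k) ℚ, φ m = ∑ i, m i * r i) :
    -- vanishing of the homology of the Koszul complex in nonzero degrees: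
    (∀ i : ℕ, i ≠ 0 →
      ∀ x ∈ (LinearMap.range (ExteriorAlgebra.ι (MvPolynomial (Fin k) ℚ) :
          (Fin k → MvPolynomial (Fin k) ℚ) →ₗ[MvPolynomial (Fin k) ℚ] _)) ^ i,
        CliffordAlgebra.contractLeft φ x = 0 →
          ∃ y ∈ (LinearMap.range (ExteriorAlgebra.ι (MvPolynomial (Fin k) ℚ) :
              (Fin k → MvPolynomial (Fin k) ℚ) →ₗ[MvPolynomial (Fin k) ℚ] _)) ^ (i + 1),
            CliffordAlgebra.contractLeft φ y = x) ∧
    -- the boundaries in degree `0` are the ideal generated by the relations: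
    (Submodule.map (CliffordAlgebra.contractLeft φ)
        ((LinearMap.range (ExteriorAlgebra.ι (MvPolynomial (Fin k) ℚ) :
          (Fin k → MvPolynomial (Fin k) ℚ) →ₗ[MvPolynomial (Fin k) ℚ] _)) ^ 1) =
      Submodule.map
        (Algebra.linearMap (MvPolynomial (Fin k) ℚ)
          (ExteriorAlgebra (MvPolynomial (Fin k) ℚ) (Fin k → MvPolynomial (Fin k) ℚ)))
        (Ideal.span (Set.range r))) ∧
    -- `H₀` is the cyclotomic field `ℚ(ζ_{p^k})`:
    (haveI : NeZero (p ^ k) := ⟨(pow_pos hp.pos k).ne'⟩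
    Nonempty ((MvPolynomial (Fin k) ℚ ⧸ Ideal.span (Set.range r)) ≃ₐ[ℚ]
      CyclotomicField (p ^ k) ℚ)) := by
  classical
  have hreg : ∀ (j : ℕ) (hj : j < k) (a : MvPolynomial (Fin k) ℚ),
      r ⟨j, hj⟩ * a ∈ Submodule.map φ (KoszulHelper.Msub (MvPolynomial (Fin k) ℚ) k j) →
        a ∈ Submodule.map φ (KoszulHelper.Msub (MvPolynomial (Fin k) ℚ) k j) := by
    intro j hj a ha
    rw [KoszulHelper.map_phi_eq r φ hφ j] at ha ⊢
    rcases Nat.eq_zero_or_pos j with rfl | hj1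
    · exact KoszulHelper.reg_zero r hp (by omega) hr0 a ha
    · exact KoszulHelper.reg_pos r hp hr0 hrs j hj1 hj a ha
  have hrange : (LinearMap.range (ExteriorAlgebra.ι (MvPolynomial (Fin k) ℚ) :
      (Fin k → MvPolynomial (Fin k) ℚ) →ₗ[MvPolynomial (Fin k) ℚ] _))
      = KoszulHelper.Gsub (MvPolynomial (Fin k) ℚ) k k := by
    rw [LinearMap.range_eq_map]
    unfold KoszulHelper.Gsub
    rw [KoszulHelper.Msub_eq_top (le_refl k)]
  refine ⟨?_, ?_, ?_⟩
  · intro i hi x hx hdx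
    obtain ⟨i', rfl⟩ := Nat.exists_eq_succ_of_ne_zero hi
    rw [hrange] at hx
    obtain ⟨y, hy, hdy⟩ := KoszulHelper.koszul_exact r φ hφ hreg k i' x hx hdx
    exact ⟨y, by rw [hrange]; exact hy, hdy⟩
  · apply le_antisymm
    · rintro _ ⟨y, hy, rfl⟩
      rw [pow_one] at hy
      obtain ⟨m, rfl⟩ := hy
      rw [CliffordAlgebra.contractLeft_ι]
      refine Submodule.mem_map.mpr ⟨φ m, ?_, rfl⟩
      rw [hφ]
      exact Ideal.sum_mem _ fun l _ =>
        Ideal.mul_mem_left _ _ (Ideal.subset_span ⟨l, rfl⟩)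
    · rintro _ ⟨a, ha, rfl⟩
      rw [KoszulHelper.span_range_eq r, ← KoszulHelper.map_phi_eq r φ hφ k] at ha
      obtain ⟨m, _, rfl⟩ := ha
      refine Submodule.mem_map.mpr ⟨ExteriorAlgebra.ι _ m, ?_, ?_⟩
      · rw [pow_one]
        exact LinearMap.mem_range_self _ m
      · rw [CliffordAlgebra.contractLeft_ι]
        rfl
  · obtain ⟨e1⟩ := KoszulHelper.quot_equiv r hp hk hr0 hrs
    haveI hfact : Fact (Irreducible (Polynomial.cyclotomic (p ^ k) ℚ)) :=
      ⟨Polynomial.cyclotomic.irreducible_rat (pow_pos hp.pos k)⟩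
    let n : ℕ := p ^ k
    set F := AdjoinRoot (Polynomial.cyclotomic (p ^ k) ℚ) with hF
    haveI : CharZero F := charZero_of_injective_algebraMap (algebraMap ℚ F).injective
    haveI hnz : NeZero ((n : ℕ) : F) :=
      ⟨Nat.cast_ne_zero.mpr (pow_pos hp.pos k).ne'⟩
    haveI hnz2 : NeZero ((p ^ k : ℕ) : F) :=
      ⟨Nat.cast_ne_zero.mpr (pow_pos hp.pos k).ne'⟩
    have hprim : IsPrimitiveRoot (AdjoinRoot.root (Polynomial.cyclotomic (p ^ k) ℚ)) (p ^ k) := by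
      have hroot : (Polynomial.cyclotomic (p ^ k) F).IsRoot
          (AdjoinRoot.root (Polynomial.cyclotomic (p ^ k) ℚ)) := by
        rw [← Polynomial.map_cyclotomic (p ^ k) (algebraMap ℚ F)]
        show Polynomial.eval _ _ = 0
        rw [Polynomial.eval_map, Subsingleton.elim (algebraMap ℚ F) (AdjoinRoot.of _),
          AdjoinRoot.eval₂_root]
      exact (Polynomial.isRoot_cyclotomic_iff (R := F) (n := p ^ k)).mp hroot
    haveI hcyc : IsCyclotomicExtension {n} ℚ F := by
      rw [IsCyclotomicExtension.iff_adjoin_eq_top]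
      constructor
      · intro m hm _
        rw [Set.mem_singleton_iff] at hm
        subst hm
        exact ⟨_, hprim⟩
      · rw [eq_top_iff]
        refine le_trans (AdjoinRoot.adjoinRoot_eq_top (f := Polynomial.cyclotomic (p ^ k) ℚ)).ge ?_
        apply Algebra.adjoin_mono
        intro x hx
        rw [Set.mem_singleton_iff] at hx
        subst hx
        exact ⟨n, rfl, (pow_pos hp.pos k).ne', hprim.pow_eq_one⟩
    haveI : NeZero n := ⟨(pow_pos hp.pos k).ne'⟩
    haveI : NeZero ((n : ℕ) : ℚ) := ⟨Nat.cast_ne_zero.mpr (pow_pos hp.pos k).ne'⟩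
    have h3 := KoszulHelper.span_range_eq r
    exact ⟨(Ideal.quotientEquivAlgOfEq ℚ h3).trans
      (e1.trans (@IsCyclotomicExtension.algEquiv {n} ℚ F _ _ _ _ (CyclotomicField n ℚ) _ _
        (CyclotomicField.isCyclotomicExtension n ℚ)))⟩
end

section
/- Let R = ℚ[x₁,…,x_k] and let p be prime. The sequence (Φ_p(x₁), x₁ − x₂^p, x₂ − x₃^p, …, x_{k−1} − x_k^p) is a regular sequence in R. -/
open Polynomial in
private lemma cyclo_expand_pow (p : ℕ) (hp : p.Prime) (m : ℕ) :
    Polynomial.expand ℚ (p ^ m) (cyclotomic p ℚ) = cyclotomic (p ^ (m + 1)) ℚ := by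
  induction m with
  | zero => simp
  | succ n ih =>
    have h1 : p ^ (n + 1) = p * p ^ n := by ring
    rw [h1, ← Polynomial.expand_expand, ih,
      cyclotomic_expand_eq_cyclotomic hp (dvd_pow_self p (Nat.succ_ne_zero n)),
      ← pow_succ]

open MvPolynomial in
private lemma step_lemma (p k : ℕ) (hp : p.Prime)
    (r : Fin k → MvPolynomial (Fin k) ℚ)
    (hr0 : ∀ i : Fin k, (i : ℕ) = 0 →
      r i = Polynomial.aeval (X i) (Polynomial.cyclotomic p ℚ))
    (hrs : ∀ i : Fin k, ∀ _ : 0 < (i : ℕ),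
      r i = X (⟨(i : ℕ) - 1, lt_of_le_of_lt (Nat.sub_le _ _) i.isLt⟩ : Fin k) - X i ^ p)
    (i : ℕ) (hi1 : 1 ≤ i) (hik : i ≤ k) :
    Ideal.span (r '' {j : Fin k | (j : ℕ) < i}) ≠ ⊤ ∧
    ∀ (hlt : i < k) (x y : MvPolynomial (Fin k) ℚ),
      Ideal.Quotient.mk (Ideal.span (r '' {j : Fin k | (j : ℕ) < i})) (r ⟨i, hlt⟩ * x) =
        Ideal.Quotient.mk (Ideal.span (r '' {j : Fin k | (j : ℕ) < i})) (r ⟨i, hlt⟩ * y) →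
      Ideal.Quotient.mk (Ideal.span (r '' {j : Fin k | (j : ℕ) < i})) x =
        Ideal.Quotient.mk (Ideal.span (r '' {j : Fin k | (j : ℕ) < i})) y := by
  set I : Ideal (MvPolynomial (Fin k) ℚ) := Ideal.span (r '' {j : Fin k | (j : ℕ) < i}) with hI
  haveI : Fact (Irreducible (Polynomial.cyclotomic (p ^ i) ℚ)) :=
    ⟨Polynomial.cyclotomic.irreducible_rat (pow_pos hp.pos i)⟩
  set K := AdjoinRoot (Polynomial.cyclotomic (p ^ i) ℚ) with hK
  set F : Fin k → MvPolynomial (Fin (k - i)) K := fun j =>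
    if h : (j : ℕ) < i then C (AdjoinRoot.root _ ^ p ^ (i - 1 - (j : ℕ)))
    else X ⟨(j : ℕ) - i, by omega⟩ with hF
  set φ : MvPolynomial (Fin k) ℚ →ₐ[ℚ] MvPolynomial (Fin (k - i)) K := aeval F with hφ
  have hmem : ∀ j : Fin k, (j : ℕ) < i → r j ∈ I := fun j hj => Ideal.subset_span ⟨j, hj, rfl⟩
  -- the central congruence: X_{i-1-d} ≡ X_{i-1}^(p^d) mod I
  have hXpow : ∀ d : ℕ, d ≤ i - 1 →
      Ideal.Quotient.mk I (X (⟨i - 1 - d, by omega⟩ : Fin k)) =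
        Ideal.Quotient.mk I (X (⟨i - 1, by omega⟩ : Fin k)) ^ p ^ d := by
    intro d
    induction d with
    | zero => intro _; simp
    | succ n ih =>
      intro hd
      have hn : n ≤ i - 1 := by omega
      set j' : Fin k := ⟨i - 1 - n, by omega⟩ with hj'
      have hpos : 0 < (j' : ℕ) := by simp [hj']; omega
      have h0 : Ideal.Quotient.mk I (r j') = 0 :=
        Ideal.Quotient.eq_zero_iff_mem.mpr (hmem j' (by simp [hj']; omega))
      rw [hrs j' hpos, map_sub, sub_eq_zero] at h0
      have hidx : (⟨(j' : ℕ) - 1, lt_of_le_of_lt (Nat.sub_le _ _) j'.isLt⟩ : Fin k)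
          = (⟨i - 1 - (n + 1), by omega⟩ : Fin k) := by
        apply Fin.ext; simp [hj']; omega
      rw [hidx] at h0
      rw [h0, map_pow, ih hn, ← pow_mul, ← pow_succ]
  -- the root condition
  have hroot : Polynomial.aeval (Ideal.Quotient.mk I (X (⟨i - 1, by omega⟩ : Fin k)))
      (Polynomial.cyclotomic (p ^ i) ℚ) = 0 := by
    have e1 : Polynomial.cyclotomic (p ^ i) ℚ
        = Polynomial.expand ℚ (p ^ (i - 1)) (Polynomial.cyclotomic p ℚ) := by
      rw [cyclo_expand_pow p hp (i - 1)]; congr 2; omega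
    rw [e1, Polynomial.expand_aeval, ← hXpow (i - 1) le_rfl]
    have hidx : (⟨i - 1 - (i - 1), by omega⟩ : Fin k) = (⟨0, by omega⟩ : Fin k) := by
      apply Fin.ext; simp
    rw [hidx, ← Ideal.Quotient.mkₐ_eq_mk ℚ I, Polynomial.aeval_algHom_apply,
      ← hr0 ⟨0, by omega⟩ rfl]
    simp only [Ideal.Quotient.mkₐ_eq_mk]
    exact Ideal.Quotient.eq_zero_iff_mem.mpr (hmem _ (by simp; omega))
  set g : K →ₐ[ℚ] MvPolynomial (Fin k) ℚ ⧸ I :=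
    AdjoinRoot.liftAlgHom _ (Algebra.ofId ℚ _) (Ideal.Quotient.mk I (X (⟨i - 1, by omega⟩ : Fin k)))
      (by rw [Algebra.toRingHom_ofId, ← Polynomial.aeval_def]; exact hroot) with hg
  set ψ : MvPolynomial (Fin (k - i)) K →ₐ[ℚ] MvPolynomial (Fin k) ℚ ⧸ I :=
    aevalTower g (fun t : Fin (k - i) => Ideal.Quotient.mk I (X (⟨i + (t : ℕ), by omega⟩ : Fin k)))
    with hψ
  -- I is contained in the kernel of φ
  have hker : ∀ z ∈ I, φ z = 0 := by
    rw [hI]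
    intro z hz
    refine Submodule.span_induction ?_ (map_zero φ) (fun a b _ _ ha hb => by
      rw [map_add, ha, hb, add_zero]) (fun a b _ hb => by rw [smul_eq_mul, map_mul, hb, mul_zero]) hz
    rintro _ ⟨j, hj, rfl⟩
    simp only [Set.mem_setOf_eq] at hj
    by_cases hj0 : (j : ℕ) = 0
    · rw [hr0 j hj0, ← Polynomial.aeval_algHom_apply φ (X j) (Polynomial.cyclotomic p ℚ)]
      have hFj : φ (X j) = C (AdjoinRoot.root _ ^ p ^ (i - 1)) := by
        rw [hφ, aeval_X, hF]; simp only [hj0, dif_pos (by omega : (0:ℕ) < i)]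
        norm_num
      rw [hFj]
      have hC : (C (AdjoinRoot.root (Polynomial.cyclotomic (p ^ i) ℚ) ^ p ^ (i - 1)) :
            MvPolynomial (Fin (k - i)) K)
          = (IsScalarTower.toAlgHom ℚ K (MvPolynomial (Fin (k - i)) K))
              (AdjoinRoot.root _ ^ p ^ (i - 1)) := rfl
      rw [hC, Polynomial.aeval_algHom_apply]
      have : Polynomial.aeval (AdjoinRoot.root (Polynomial.cyclotomic (p ^ i) ℚ) ^ p ^ (i - 1))
          (Polynomial.cyclotomic p ℚ) = 0 := by
        rw [← Polynomial.expand_aeval, cyclo_expand_pow p hp (i - 1),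
          show i - 1 + 1 = i by omega]
        erw [AdjoinRoot.aeval_eq, AdjoinRoot.mk_self]
      rw [this, map_zero]
    · have hj1 : 0 < (j : ℕ) := by omega
      rw [hrs j hj1, map_sub, map_pow, hφ, aeval_X, aeval_X, hF]
      simp only []
      rw [dif_pos (show (j : ℕ) - 1 < i by omega), dif_pos hj]
      rw [← map_pow, ← pow_mul, ← pow_succ]
      have : i - 1 - ((j : ℕ) - 1) = i - 1 - (j : ℕ) + 1 := by omega
      rw [this, sub_self]
  -- ψ ∘ φ = quotient map
  have hcomp : ∀ z, ψ (φ z) = Ideal.Quotient.mk I z := by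
    have h : ψ.comp φ = Ideal.Quotient.mkₐ ℚ I := by
      apply MvPolynomial.algHom_ext
      intro j
      simp only [AlgHom.comp_apply, Ideal.Quotient.mkₐ_eq_mk, hφ, aeval_X, hF]
      by_cases hj : (j : ℕ) < i
      · have hgr : g (AdjoinRoot.root (Polynomial.cyclotomic (p ^ i) ℚ))
            = Ideal.Quotient.mk I (X (⟨i - 1, by omega⟩ : Fin k)) :=
          AdjoinRoot.liftAlgHom_root _ _ _ _
        rw [dif_pos hj, hψ, aevalTower_C, map_pow, hgr,
          ← hXpow (i - 1 - (j : ℕ)) (by omega)]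
        have he : (⟨i - 1 - (i - 1 - (j : ℕ)), by omega⟩ : Fin k) = j := by
          apply Fin.ext; simp; omega
        rw [he]
      · rw [dif_neg hj, hψ, aevalTower_X]
        have he : (⟨i + ((j : ℕ) - i), by omega⟩ : Fin k) = j := by
          apply Fin.ext; simp; omega
        rw [he]
    intro z
    simpa only [Ideal.Quotient.mkₐ_eq_mk, AlgHom.comp_apply] using AlgHom.congr_fun h z
  constructor
  · intro htop
    have h1 : (1 : MvPolynomial (Fin k) ℚ) ∈ I := htop ▸ Submodule.mem_top
    have := hker 1 h1
    rw [map_one] at this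
    exact one_ne_zero this
  · intro hlt x y hxy
    have hsub : r ⟨i, hlt⟩ * x - r ⟨i, hlt⟩ * y ∈ I := Ideal.Quotient.eq.mp hxy
    have h2 : φ (r ⟨i, hlt⟩) * φ x = φ (r ⟨i, hlt⟩) * φ y := by
      have := hker _ hsub
      rwa [map_sub, map_mul, map_mul, sub_eq_zero] at this
    have hφr : φ (r ⟨i, hlt⟩) ≠ 0 := by
      rw [hrs ⟨i, hlt⟩ (by simp; omega), map_sub, map_pow, hφ, aeval_X, aeval_X, hF]
      simp only [Fin.val_mk]
      rw [dif_pos (show i - 1 < i by omega), dif_neg (lt_irrefl i)]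
      intro hcon
      rw [sub_eq_zero] at hcon
      have hcoef := congrArg
        (MvPolynomial.coeff (Finsupp.single (⟨i - i, by omega⟩ : Fin (k - i)) p)) hcon
      rw [MvPolynomial.coeff_C, MvPolynomial.coeff_X_pow,
        if_neg (fun hcon2 => hp.ne_zero
          (by simpa using (Finsupp.single_eq_zero.mp hcon2.symm))),
        if_pos rfl] at hcoef
      exact zero_ne_one hcoef
    have h3 : φ x = φ y := mul_left_cancel₀ hφr h2
    calc Ideal.Quotient.mk I x = ψ (φ x) := (hcomp x).symm
      _ = ψ (φ y) := by rw [h3]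
      _ = Ideal.Quotient.mk I y := hcomp y

open MvPolynomial in
/-- For `R = ℚ[x₁,…,x_k]` and `p` prime, the sequence
`(Φ_p(x₁), x₁ − x₂^p, …, x_{k−1} − x_k^p)` is a regular sequence in `R`.
(Variables are indexed zero-based by `Fin k`.) -/
theorem koszul_relations_regular_sequence (p k : ℕ) (hp : p.Prime)
    (r : Fin k → MvPolynomial (Fin k) ℚ)
    (hr0 : ∀ i : Fin k, (i : ℕ) = 0 →
      r i = Polynomial.aeval (X i) (Polynomial.cyclotomic p ℚ))
    (hrs : ∀ i : Fin k, ∀ _ : 0 < (i : ℕ),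
      r i = X (⟨(i : ℕ) - 1, lt_of_le_of_lt (Nat.sub_le _ _) i.isLt⟩ : Fin k) - X i ^ p) :
    RingTheory.Sequence.IsRegular (MvPolynomial (Fin k) ℚ) (List.ofFn r) := by
  have hof : ∀ n : ℕ, n ≤ k → Ideal.ofList ((List.ofFn r).take n)
      = Ideal.span (r '' {j : Fin k | (j : ℕ) < n}) := by
    intro n hn
    apply congrArg Ideal.span
    ext a
    simp only [Set.mem_setOf_eq, Set.mem_image]
    constructor
    · intro ha
      obtain ⟨m, hm, hma⟩ := List.getElem_of_mem ha
      have hmn : m < n := by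
        have := hm; simp [List.length_take, List.length_ofFn] at this; omega
      have hmk : m < k := by
        have := hm; simp [List.length_take, List.length_ofFn] at this; omega
      refine ⟨⟨m, hmk⟩, hmn, ?_⟩
      rw [← hma, List.getElem_take, List.getElem_ofFn]
    · rintro ⟨j, hj, rfl⟩
      have hlen : (j : ℕ) < ((List.ofFn r).take n).length := by
        simp [List.length_take, List.length_ofFn]; omega
      have : ((List.ofFn r).take n)[(j : ℕ)] = r j := by
        rw [List.getElem_take, List.getElem_ofFn]
      rw [← this]
      exact List.getElem_mem _
  have hsm : ∀ J : Ideal (MvPolynomial (Fin k) ℚ),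
      (J • (⊤ : Submodule (MvPolynomial (Fin k) ℚ) (MvPolynomial (Fin k) ℚ))) = J := by
    intro J
    rw [Ideal.smul_eq_mul, Ideal.mul_top]
  constructor
  · rw [RingTheory.Sequence.isWeaklyRegular_iff]
    intro n hn
    rw [List.length_ofFn] at hn
    rw [List.getElem_ofFn]
    rcases Nat.eq_zero_or_pos n with hn0 | hn1
    · subst hn0
      -- quotient by the zero ideal
      intro a b hab
      obtain ⟨x, rfl⟩ := Ideal.Quotient.mk_surjective a
      obtain ⟨y, rfl⟩ := Ideal.Quotient.mk_surjective b
      have hab' : Ideal.Quotient.mk _ (r ⟨0, hn⟩ * x) = Ideal.Quotient.mk _ (r ⟨0, hn⟩ * y) := hab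
      have hbot : Ideal.ofList ((List.ofFn r).take 0) • (⊤ :
          Submodule (MvPolynomial (Fin k) ℚ) (MvPolynomial (Fin k) ℚ)) = ⊥ := by
        simp
      have hmem := Ideal.Quotient.eq.mp hab'
      rw [hbot] at hmem
      have heq : r ⟨0, hn⟩ * x = r ⟨0, hn⟩ * y := by
        have := (Submodule.mem_bot _).mp hmem
        linear_combination this
      have hr0ne : r ⟨0, hn⟩ ≠ 0 := by
        intro hcon
        have h1 : aeval (fun _ : Fin k => (0 : ℚ)) (r ⟨0, hn⟩) = 0 := by
          rw [hcon, map_zero]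
        rw [hr0 ⟨0, hn⟩ rfl,
          ← Polynomial.aeval_algHom_apply (aeval fun _ : Fin k => (0 : ℚ)), aeval_X] at h1
        rw [Polynomial.coe_aeval_eq_eval, ← Polynomial.coeff_zero_eq_eval_zero,
          Polynomial.cyclotomic_coeff_zero ℚ hp.one_lt] at h1
        exact one_ne_zero h1
      have := mul_left_cancel₀ hr0ne heq
      rw [this]
    · obtain ⟨hne, hreg⟩ := step_lemma p k hp r hr0 hrs n hn1 (le_of_lt hn)
      rw [hof n (le_of_lt hn), hsm]
      intro a b hab
      obtain ⟨x, rfl⟩ := Ideal.Quotient.mk_surjective a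
      obtain ⟨y, rfl⟩ := Ideal.Quotient.mk_surjective b
      exact hreg hn x y hab
  · rcases Nat.eq_zero_or_pos k with hk0 | hk1
    · subst hk0
      simp only [List.ofFn_zero, Ideal.ofList_nil, Submodule.bot_smul]
      exact top_ne_bot
    · obtain ⟨hne, _⟩ := step_lemma p k hp r hr0 hrs k hk1 le_rfl
      have : Ideal.ofList (List.ofFn r) = Ideal.span (r '' {j : Fin k | (j : ℕ) < k}) := by
        rw [← List.take_length (l := List.ofFn r)]
        rw [List.length_ofFn]
        exact hof k le_rfl
      rw [this, hsm]
      exact fun h => hne h.symm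
end
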